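/- Let $D$ be a finite set with $|D|\geq 2$, $p_0$ a strictly positive probability mass function, $c>1$ with $c < \min_s 1/(1-p_0(s))$, $d = c-1$, and $u : D \to \mathbb{R}$ nonconstant. Define $\overline{p}(s) = p_0(s)\left(1 - \sqrt{d}\,\frac{\mathbb{E}_0[u] - u(s)}{\mathbb{S}_0[u]}\right)$. Then $\overline{p}$ is a probability mass function with $\sum_s \overline{p}(s)^2/p_0(s) = c$ and $\sum_s \overline{p}(s) u(s) = \mathbb{E}_0[u] + \sqrt{d}\, \mathbb{S}_0[u]$. -/

import Mathlib

/-- Expectation of `u` under the probability mass function `p`. -/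
noncomputable def expct {D : Type*} [Fintype D] (p u : D → ℝ) : ℝ := ∑ s, p s * u s

/-- Variance of `u` under the probability mass function `p`. -/
noncomputable def var0 {D : Type*} [Fintype D] (p u : D → ℝ) : ℝ :=
  ∑ s, p s * (u s - expct p u) ^ 2

/-- Standard deviation of `u` under the probability mass function `p`. -/
noncomputable def sdev {D : Type*} [Fintype D] (p u : D → ℝ) : ℝ :=
  Real.sqrt (var0 p u)

theorem stmt_5 {D : Type*} [Fintype D]
    (hD : 2 ≤ Fintype.card D)
    (p0 : D → ℝ) (hpos : ∀ s, 0 < p0 s) (hsum : ∑ s, p0 s = 1)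
    (c : ℝ) (hc1 : 1 < c) (hc : ∀ s, c < 1 / (1 - p0 s))
    (d : ℝ) (hd : d = c - 1)
    (u : D → ℝ) (hu : ∃ s t, u s ≠ u t)
    (pmax : D → ℝ)
    (hpmax : ∀ s, pmax s =
      p0 s * (1 - Real.sqrt d * (expct p0 u - u s) / sdev p0 u)) :
    (∀ s, 0 < pmax s) ∧ (∑ s, pmax s = 1) ∧
      (∑ s, (pmax s) ^ 2 / p0 s = c) ∧
      (∑ s, pmax s * u s = expct p0 u + Real.sqrt d * sdev p0 u) := by
  classical
  obtain ⟨s₀, t₀, hst⟩ := hu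
  set μ := expct p0 u with hμ
  set V := var0 p0 u with hVdef
  set σ := sdev p0 u with hσdef
  have hd0 : 0 < d := by rw [hd]; linarith
  have hVpos : 0 < V := by
    have key : u s₀ ≠ μ ∨ u t₀ ≠ μ := by
      by_contra h; push_neg at h; exact hst (h.1.trans h.2.symm)
    rw [hVdef, var0, ← hμ]
    apply Finset.sum_pos'
    · intro i _
      have := (hpos i).le
      positivity
    · rcases key with h | h
      · refine ⟨s₀, Finset.mem_univ _, ?_⟩
        have h' : u s₀ - μ ≠ 0 := sub_ne_zero.2 h
        have := hpos s₀
        positivity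
      · refine ⟨t₀, Finset.mem_univ _, ?_⟩
        have h' : u t₀ - μ ≠ 0 := sub_ne_zero.2 h
        have := hpos t₀
        positivity
  have hσpos : 0 < σ := Real.sqrt_pos.2 hVpos
  have hσsq : σ ^ 2 = V := Real.sq_sqrt hVpos.le
  -- basic sums
  have S1 : ∑ s, p0 s * (μ - u s) = 0 := by
    have : ∀ s : D, p0 s * (μ - u s) = p0 s * μ - p0 s * u s := fun s => by ring
    rw [Finset.sum_congr rfl fun s _ => this s, Finset.sum_sub_distrib,
      ← Finset.sum_mul, hsum, one_mul]
    have : ∑ s, p0 s * u s = μ := rfl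
    rw [this, sub_self]
  have S2 : ∑ s, p0 s * (μ - u s) ^ 2 = V := by
    rw [hVdef, var0, ← hμ]
    exact Finset.sum_congr rfl fun s _ => by ring
  have S2' : ∑ s, p0 s * (u s - μ) ^ 2 = V := by
    rw [← S2]; exact Finset.sum_congr rfl fun s _ => by ring
  have S1' : ∑ s, p0 s * (u s - μ) = 0 := by
    rw [← neg_eq_zero, ← Finset.sum_neg_distrib, ← S1]
    exact Finset.sum_congr rfl fun s _ => by ring
  -- key pointwise bound
  have hkey : ∀ s, Real.sqrt d * (μ - u s) < σ := by
    intro s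
    have h1s : 0 < 1 - p0 s := by
      by_contra h
      push_neg at h
      have h2 : 1 / (1 - p0 s) ≤ 0 := div_nonpos_of_nonneg_of_nonpos zero_le_one h
      linarith [hc s]
    have hdlt : d * (1 - p0 s) < p0 s := by
      have := (lt_div_iff₀ h1s).mp (hc s)
      rw [hd]; nlinarith
    -- Cauchy-Schwarz on the complement of s
    set a := u s - μ with ha
    have hCS : (p0 s * a) ^ 2 ≤ (1 - p0 s) * (V - p0 s * a ^ 2) := by
      have cs := Finset.sum_mul_sq_le_sq_mul_sq (Finset.univ.erase s)
        (fun t => Real.sqrt (p0 t)) (fun t => Real.sqrt (p0 t) * (u t - μ))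
      have e1 : ∑ t ∈ Finset.univ.erase s,
          Real.sqrt (p0 t) * (Real.sqrt (p0 t) * (u t - μ)) = - (p0 s * a) := by
        have : ∀ t : D, Real.sqrt (p0 t) * (Real.sqrt (p0 t) * (u t - μ))
            = p0 t * (u t - μ) := by
          intro t
          rw [← mul_assoc, Real.mul_self_sqrt (hpos t).le]
        rw [Finset.sum_congr rfl fun t _ => this t,
          Finset.sum_erase_eq_sub (Finset.mem_univ s), S1']
        ring
      have e2 : ∑ t ∈ Finset.univ.erase s, Real.sqrt (p0 t) ^ 2 = 1 - p0 s := by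
        have : ∀ t : D, Real.sqrt (p0 t) ^ 2 = p0 t := fun t =>
          Real.sq_sqrt (hpos t).le
        rw [Finset.sum_congr rfl fun t _ => this t,
          Finset.sum_erase_eq_sub (Finset.mem_univ s), hsum]
      have e3 : ∑ t ∈ Finset.univ.erase s,
          (Real.sqrt (p0 t) * (u t - μ)) ^ 2 = V - p0 s * a ^ 2 := by
        have : ∀ t : D, (Real.sqrt (p0 t) * (u t - μ)) ^ 2
            = p0 t * (u t - μ) ^ 2 := by
          intro t
          rw [mul_pow, Real.sq_sqrt (hpos t).le]
        rw [Finset.sum_congr rfl fun t _ => this t,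
          Finset.sum_erase_eq_sub (Finset.mem_univ s), S2']
      rw [e1, e2, e3] at cs
      calc (p0 s * a) ^ 2 = (-(p0 s * a)) ^ 2 := by ring
        _ ≤ (1 - p0 s) * (V - p0 s * a ^ 2) := cs
    have hp := hpos s
    have hda2 : d * a ^ 2 < V := by
      rcases eq_or_ne a 0 with h0 | h0
      · rw [h0]; simpa using hVpos
      · have ha2 : 0 < a ^ 2 := by positivity
        nlinarith
    have hx2 : (Real.sqrt d * (μ - u s)) ^ 2 = d * a ^ 2 := by
      rw [mul_pow, Real.sq_sqrt hd0.le, ha]; ring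
    nlinarith [hx2, hda2, hσsq, hσpos]
  refine ⟨?_, ?_, ?_, ?_⟩
  · intro s
    rw [hpmax s]
    apply mul_pos (hpos s)
    have : Real.sqrt d * (μ - u s) / σ < 1 := (div_lt_one hσpos).2 (hkey s)
    linarith
  · have e : ∀ s : D, pmax s = p0 s - Real.sqrt d / σ * (p0 s * (μ - u s)) := by
      intro s; rw [hpmax s]; ring
    rw [Finset.sum_congr rfl fun s _ => e s, Finset.sum_sub_distrib,
      ← Finset.mul_sum, hsum, S1]
    ring
  · have e : ∀ s : D, pmax s ^ 2 / p0 s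
        = p0 s - 2 * (Real.sqrt d / σ) * (p0 s * (μ - u s))
          + (Real.sqrt d / σ) ^ 2 * (p0 s * (μ - u s) ^ 2) := by
      intro s
      rw [hpmax s]
      have h1 : p0 s ≠ 0 := (hpos s).ne'
      have h2 : σ ≠ 0 := hσpos.ne'
      field_simp
      ring_nf
    rw [Finset.sum_congr rfl fun s _ => e s, Finset.sum_add_distrib,
      Finset.sum_sub_distrib, ← Finset.mul_sum, ← Finset.mul_sum, hsum, S1, S2]
    have : (Real.sqrt d / σ) ^ 2 * V = d := by
      rw [div_pow, Real.sq_sqrt hd0.le, hσsq, div_mul_cancel₀ _ hVpos.ne']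
    rw [this, hd]; ring
  · have S3 : ∑ s, p0 s * (μ - u s) * u s = -V := by
      have e : ∀ s : D, p0 s * (μ - u s) * u s
          = μ * (p0 s * (μ - u s)) - p0 s * (μ - u s) ^ 2 := fun s => by ring
      rw [Finset.sum_congr rfl fun s _ => e s, Finset.sum_sub_distrib,
        ← Finset.mul_sum, S1, S2]
      ring
    have e : ∀ s : D, pmax s * u s
        = p0 s * u s - Real.sqrt d / σ * (p0 s * (μ - u s) * u s) := by
      intro s; rw [hpmax s]; ring
    rw [Finset.sum_congr rfl fun s _ => e s, Finset.sum_sub_distrib,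
      ← Finset.mul_sum, S3]
    have hμe : ∑ s, p0 s * u s = μ := rfl
    rw [hμe]
    have : Real.sqrt d / σ * V = Real.sqrt d * σ := by
      rw [← hσsq]; field_simp
    rw [mul_neg, sub_neg_eq_add, this]
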